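/- Let S be a semiring, μ : Σ_r^* → S^{n×n} a monoid morphism, α ∈ S^{1×n}, β ∈ S^{n×1}, and let β̃ : {b,c}^* → S^{rn×rn} be the second embedding (β̃(b) the block cyclic shift, β̃(c) = diag(μ(a_1),...,μ(a_r))). Set α' = (α, 0,...,0) ∈ S^{1×rn} and β' = (β; β; ...; β) ∈ S^{rn×1} (β repeated r times). Then for any word v = c^{i_1}b···c^{i_k}bc^{i_{k+1}}, α' β̃(v) β' = α μ(a_1^{i_1} a_2^{i_2} ··· a_{k+1}^{i_{k+1}}) β (cyclic indexing of letters). Consequently, {α' β̃(v) β' : v ∈ {b,c}^*} = {α μ(w) β : w ∈ Σ_r^*}. -/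

import Mathlib

open Matrix

/-- The block cyclic shift matrix `[0, I_{(r-1)n}; I_n, 0]`. -/
def cycShift (S : Type*) [Semiring S] (r n : ℕ) :
    Matrix (Fin r × Fin n) (Fin r × Fin n) S :=
  Matrix.of fun p q => if (q.1 : ℕ) = ((p.1 : ℕ) + 1) % r ∧ p.2 = q.2 then 1 else 0

/-- The block diagonal matrix `diag(U_1, …, U_r)`. -/
def diagBlk {S : Type*} [Semiring S] {r n : ℕ}
    (U : Fin r → Matrix (Fin n) (Fin n) S) :
    Matrix (Fin r × Fin n) (Fin r × Fin n) S :=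
  Matrix.of fun p q => if p.1 = q.1 then U p.1 p.2 q.2 else 0

/-- The second embedding `β̃ : {b,c}^* → S^{rn×rn}`, `b = 0 ↦` block cyclic
shift, `c = 1 ↦ diag(μ(a_1), …, μ(a_r))`. -/
def secondEmb {S : Type*} [Semiring S] {r n : ℕ}
    (μ : FreeMonoid (Fin r) →* Matrix (Fin n) (Fin n) S) :
    FreeMonoid (Fin 2) →* Matrix (Fin r × Fin n) (Fin r × Fin n) S :=
  FreeMonoid.lift fun x =>
    if x = 0 then cycShift S r n else diagBlk fun i => μ (FreeMonoid.of i)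

/-- The word `c^{i_1} b ⋯ c^{i_k} b c^{i_{k+1}}` encoded by `L = [i_1, …, i_k]`
and `e = i_{k+1}`. -/
def expWord (L : List ℕ) (e : ℕ) : FreeMonoid (Fin 2) :=
  (L.map fun i => (FreeMonoid.of (1 : Fin 2)) ^ i * FreeMonoid.of (0 : Fin 2)).prod
    * (FreeMonoid.of (1 : Fin 2)) ^ e

open Fin.NatCast in
/-- The word `a_m^{i_1} a_{m+1}^{i_2} ⋯ a_{m+k}^{i_{k+1}}` over `Σ_r`, cyclic
indexing (`0`-indexed). -/
def cycWord {r : ℕ} [NeZero r] (L : List ℕ) (e : ℕ) (m : Fin r) :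
    FreeMonoid (Fin r) :=
  ((((L ++ [e]).zipIdx.map Prod.swap)).map fun te =>
    (FreeMonoid.of (m + (te.1 : Fin r))) ^ te.2).prod

/-- `α' = (α, 0, …, 0) ∈ S^{1×rn}`. -/
def rowExt {S : Type*} [Semiring S] {r n : ℕ} [NeZero r]
    (α : Matrix (Fin 1) (Fin n) S) : Matrix (Fin 1) (Fin r × Fin n) S :=
  Matrix.of fun _ q => if q.1 = 0 then α 0 q.2 else 0

/-- `β' = (β; β; …; β) ∈ S^{rn×1}` (`β` repeated `r` times). -/
def colExt {S : Type*} [Semiring S] {r n : ℕ}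
    (β : Matrix (Fin n) (Fin 1) S) : Matrix (Fin r × Fin n) (Fin 1) S :=
  Matrix.of fun p _ => β p.2 0

section Aux

variable {S : Type*} [Semiring S] {r n : ℕ} [NeZero r]

open Fin.NatCast Fin.CommRing

/-- Row vector supported on block `m`. -/
def rowAt (m : Fin r) (ρ : Matrix (Fin 1) (Fin n) S) :
    Matrix (Fin 1) (Fin r × Fin n) S :=
  Matrix.of fun _ q => if q.1 = m then ρ 0 q.2 else 0

lemma rowAt_mul_cycShift (m : Fin r) (ρ : Matrix (Fin 1) (Fin n) S) :
    rowAt m ρ * cycShift S r n = rowAt (m + 1) ρ := by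
  ext i q
  simp only [Matrix.mul_apply, rowAt, cycShift, Matrix.of_apply, Fintype.sum_prod_type,
    ite_and, ite_mul, zero_mul, mul_ite, mul_one, mul_zero]
  rw [Fintype.sum_eq_single m
    (fun x hx => Finset.sum_eq_zero (fun x1 _ => by split_ifs <;> simp_all))]
  have hv : ((m + 1 : Fin r) : ℕ) = ((m : ℕ) + 1) % r := by
    simp [Fin.add_def, Nat.add_mod]
  by_cases h : (q.1 : ℕ) = ((m : ℕ) + 1) % r
  · have hq : q.1 = m + 1 := by
      apply Fin.ext; rw [hv]; exact h
    simp [h, hq, hv, Finset.sum_ite_eq']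
  · have hq : ¬ q.1 = m + 1 := by
      intro hc; exact h (by rw [hc, hv])
    simp [h, hq]

lemma rowAt_mul_diagBlk (m : Fin r) (ρ : Matrix (Fin 1) (Fin n) S)
    (U : Fin r → Matrix (Fin n) (Fin n) S) :
    rowAt m ρ * diagBlk U = rowAt m (ρ * U m) := by
  ext i q
  simp only [Matrix.mul_apply, rowAt, diagBlk, Matrix.of_apply, Fintype.sum_prod_type,
    ite_mul, zero_mul, mul_ite, mul_zero]
  rw [Fintype.sum_eq_single m
    (fun x hx => Finset.sum_eq_zero (fun x1 _ => by split_ifs <;> simp_all))]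
  by_cases h : q.1 = m
  · simp [h, Matrix.mul_apply]
  · have : ¬ m = q.1 := fun hc => h hc.symm
    simp [h, this]

lemma rowAt_mul_colExt (m : Fin r) (ρ : Matrix (Fin 1) (Fin n) S)
    (β : Matrix (Fin n) (Fin 1) S) :
    rowAt m ρ * colExt (r := r) β = ρ * β := by
  ext i q
  rw [Subsingleton.elim i 0, Subsingleton.elim q 0]
  simp only [Matrix.mul_apply, rowAt, colExt, Matrix.of_apply, Fintype.sum_prod_type,
    ite_mul, zero_mul]
  simp [Finset.sum_ite_eq, Matrix.mul_apply]

lemma rowExt_eq_rowAt (α : Matrix (Fin 1) (Fin n) S) :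
    rowExt (r := r) α = rowAt 0 α := rfl

/-- Decode a word over `{b,c}` starting from block `m`. -/
def dec : List (Fin 2) → Fin r → FreeMonoid (Fin r)
  | [], _ => 1
  | x :: l, m => if x = 0 then dec l (m + 1) else FreeMonoid.of m * dec l m

lemma key (μ : FreeMonoid (Fin r) →* Matrix (Fin n) (Fin n) S) :
    ∀ (l : List (Fin 2)) (m : Fin r) (ρ : Matrix (Fin 1) (Fin n) S),
      ∃ m', rowAt m ρ * secondEmb μ (FreeMonoid.ofList l)
        = rowAt m' (ρ * μ (dec l m))
  | [], m, ρ => ⟨m, by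
      rw [show FreeMonoid.ofList ([] : List (Fin 2)) = 1 from rfl, _root_.map_one]
      simp [dec]⟩
  | x :: l, m, ρ => by
    have hsplit : FreeMonoid.ofList (x :: l)
        = FreeMonoid.of x * FreeMonoid.ofList l := rfl
    rw [hsplit, _root_.map_mul]
    simp only [← Matrix.mul_assoc]
    rcases Fin.exists_fin_two.mp ⟨x, rfl⟩ with hx | hx
    · subst hx
      rw [show secondEmb μ (FreeMonoid.of 0) = cycShift S r n by
        simp [secondEmb], rowAt_mul_cycShift]
      obtain ⟨m', hm'⟩ := key μ l (m + 1) ρ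
      exact ⟨m', by rw [hm']; simp [dec]⟩
    · subst hx
      rw [show secondEmb μ (FreeMonoid.of 1)
          = diagBlk fun i => μ (FreeMonoid.of i) by simp [secondEmb],
        rowAt_mul_diagBlk]
      obtain ⟨m', hm'⟩ := key μ l m (ρ * μ (FreeMonoid.of m))
      refine ⟨m', ?_⟩
      rw [hm']
      simp [dec, _root_.map_mul, Matrix.mul_assoc]

lemma scalar_eq (μ : FreeMonoid (Fin r) →* Matrix (Fin n) (Fin n) S)
    (α : Matrix (Fin 1) (Fin n) S) (β : Matrix (Fin n) (Fin 1) S)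
    (v : FreeMonoid (Fin 2)) :
    rowExt (r := r) α * secondEmb μ v * colExt (r := r) β = α * μ (dec (FreeMonoid.toList v) 0) * β := by
  obtain ⟨m', hm'⟩ := key μ (FreeMonoid.toList v) 0 α
  rw [rowExt_eq_rowAt, ← FreeMonoid.ofList_toList v, hm', rowAt_mul_colExt,
    FreeMonoid.ofList_toList]

/-- Recursive version of `cycWord`. -/
def cycAux : List ℕ → Fin r → FreeMonoid (Fin r)
  | [], _ => 1
  | i :: t, m => (FreeMonoid.of m) ^ i * cycAux t (m + 1)

lemma enumFrom_prod (l : List ℕ) : ∀ (s : ℕ) (m : Fin r),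
    (((l.zipIdx s).map Prod.swap).map fun te =>
      (FreeMonoid.of (m + (te.1 : Fin r))) ^ te.2).prod = cycAux l (m + (s : Fin r)) := by
  induction l with
  | nil => intro s m; simp [cycAux]
  | cons i t ih =>
    intro s m
    rw [List.zipIdx_cons, List.map_cons, List.map_cons, List.prod_cons, ih (s + 1) m, cycAux]
    congr 1
    push_cast
    ring

lemma cycWord_eq_cycAux (L : List ℕ) (e : ℕ) (m : Fin r) :
    cycWord L e m = cycAux (L ++ [e]) m := by
  rw [cycWord, enumFrom_prod]
  norm_num

lemma dec_replicate_one (l : List (Fin 2)) : ∀ (i : ℕ) (m : Fin r),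
    dec (List.replicate i 1 ++ l) m = (FreeMonoid.of m) ^ i * dec l m := by
  intro i
  induction i with
  | zero => intro m; simp
  | succ j ih =>
    intro m
    rw [List.replicate_succ, List.cons_append, dec, pow_succ']
    simp [ih m, mul_assoc]

lemma toList_pow_of (x : Fin 2) (k : ℕ) :
    FreeMonoid.toList ((FreeMonoid.of x) ^ k) = List.replicate k x := by
  induction k with
  | zero => simp
  | succ j ih => rw [pow_succ', FreeMonoid.toList_mul, ih, List.replicate_succ]; rfl

lemma dec_expWord (e : ℕ) : ∀ (L : List ℕ) (m : Fin r),
    dec (FreeMonoid.toList (expWord L e)) m = cycAux (L ++ [e]) m := by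
  intro L
  induction L with
  | nil =>
    intro m
    rw [expWord]
    simp only [List.map_nil, List.prod_nil, one_mul, toList_pow_of]
    rw [show List.replicate e (1 : Fin 2) = List.replicate e 1 ++ [] by simp,
      dec_replicate_one]
    simp [dec, cycAux]
  | cons i t ih =>
    intro m
    have hw : expWord (i :: t) e
        = (FreeMonoid.of (1 : Fin 2)) ^ i * (FreeMonoid.of (0 : Fin 2) * expWord t e) := by
      rw [expWord, List.map_cons, List.prod_cons, expWord]
      simp [mul_assoc]
    rw [hw, FreeMonoid.toList_mul, toList_pow_of, dec_replicate_one]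
    have : dec (FreeMonoid.toList (FreeMonoid.of (0 : Fin 2) * expWord t e)) m
        = cycAux (t ++ [e]) (m + 1) := by
      rw [FreeMonoid.toList_mul, show FreeMonoid.toList (FreeMonoid.of (0 : Fin 2)) = [0] from rfl]
      rw [List.singleton_append, dec]
      simp [ih (m + 1)]
    rw [this, List.cons_append, cycAux]

/-- Encode a word over `Σ_r` as a word over `{b,c}`. -/
def enc : List (Fin r) → Fin r → List (Fin 2)
  | [], _ => []
  | x :: t, m => List.replicate ((x - m).val) 0 ++ 1 :: enc t x

lemma dec_replicate_zero (l : List (Fin 2)) : ∀ (j : ℕ) (m : Fin r),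
    dec (List.replicate j 0 ++ l) m = dec l (m + (j : Fin r)) := by
  intro j
  induction j with
  | zero => intro m; simp
  | succ i ih =>
    intro m
    rw [List.replicate_succ, List.cons_append, dec, if_pos rfl, ih]
    congr 1
    push_cast
    ring

lemma dec_enc : ∀ (w : List (Fin r)) (m : Fin r),
    dec (enc w m) m = FreeMonoid.ofList w
  | [], m => rfl
  | x :: t, m => by
    rw [enc, dec_replicate_zero, Fin.cast_val_eq_self, dec]
    have hx : ¬ (1 : Fin 2) = 0 := by decide
    rw [if_neg hx, show m + (x - m) = x by ring, dec_enc t x]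
    rfl

end Aux

/-- For any word `v = c^{i_1}b⋯c^{i_k}bc^{i_{k+1}}`,
`α' β̃(v) β' = α μ(a_1^{i_1} a_2^{i_2} ⋯ a_{k+1}^{i_{k+1}}) β` (cyclic
indexing); consequently `{α' β̃(v) β' : v ∈ {b,c}^*} = {α μ(w) β : w ∈ Σ_r^*}`. -/
theorem scalar_r_to_two {S : Type*} [Semiring S] {r n : ℕ} [NeZero r]
    (μ : FreeMonoid (Fin r) →* Matrix (Fin n) (Fin n) S)
    (α : Matrix (Fin 1) (Fin n) S) (β : Matrix (Fin n) (Fin 1) S) :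
    (∀ (L : List ℕ) (e : ℕ),
      rowExt (r := r) α * secondEmb μ (expWord L e) * colExt (r := r) β
        = α * μ (cycWord L e 0) * β) ∧
    Set.range (fun v : FreeMonoid (Fin 2) => rowExt (r := r) α * secondEmb μ v * colExt (r := r) β)
      = Set.range (fun w : FreeMonoid (Fin r) => α * μ w * β) := by
  constructor
  · intro L e
    rw [scalar_eq, dec_expWord, cycWord_eq_cycAux]
  · ext s
    constructor
    · rintro ⟨v, rfl⟩
      exact ⟨dec (FreeMonoid.toList v) 0, (scalar_eq μ α β v).symm⟩
    · rintro ⟨w, rfl⟩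
      refine ⟨FreeMonoid.ofList (enc (FreeMonoid.toList w) 0), ?_⟩
      show rowExt (r := r) α * secondEmb μ _ * colExt (r := r) β = α * μ w * β
      rw [scalar_eq, FreeMonoid.toList_ofList, dec_enc, FreeMonoid.ofList_toList]
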